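/- Let [a,b] ⊂ [t0,∞). Suppose p_{12}(t) ≥ 0 for t ∈ [a,b], and ∫_a^b min[ p_{12}(t) exp{−∫_a^t E(τ) dτ}, −p_{21}(t) exp{∫_a^t E(τ) dτ} ] dt ≥ π. Then the system (2.3) is oscillatory on [a,b], i.e., for every solution (φ(t), ψ(t)) of (2.3) the function φ(t) vanishes at some point of [a,b]. -/

import Mathlib

set_option autoImplicit false

open MeasureTheory Set

/-- `(φ, ψ)` is a (locally absolutely continuous) solution of the linear system (2.3)
`φ' = p11 φ + p12 ψ`, `ψ' = p21 φ + p22 ψ` almost everywhere on the set `S`,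
with base point `b`. -/
def Sys2SolOn (p11 p12 p21 p22 φ ψ : ℝ → ℝ) (b : ℝ) (S : Set ℝ) : Prop :=
  ∃ dφ dψ : ℝ → ℝ,
    (∀ t ∈ S, IntervalIntegrable dφ volume b t ∧ IntervalIntegrable dψ volume b t ∧
      φ t = φ b + ∫ τ in b..t, dφ τ ∧ ψ t = ψ b + ∫ τ in b..t, dψ τ) ∧
    (∀ᵐ t ∂volume, t ∈ S →
      dφ t = p11 t * φ t + p12 t * ψ t ∧ dψ t = p21 t * φ t + p22 t * ψ t)

noncomputable def Theta : ℝ × ℝ × ℝ → ℝ := fun p => Real.arctan (p.2.1 * Real.exp p.2.2 / p.1)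

lemma isOpen_U : IsOpen {p : ℝ × ℝ × ℝ | p.1 ≠ 0} :=
  isOpen_compl_singleton.preimage continuous_fst

lemma theta_contDiffOn : ContDiffOn ℝ 1 Theta {p : ℝ × ℝ × ℝ | p.1 ≠ 0} := by
  apply Real.contDiff_arctan.comp_contDiffOn
  exact (((contDiff_fst.comp contDiff_snd).contDiffOn.mul
    ((Real.contDiff_exp.comp (contDiff_snd.comp contDiff_snd)).contDiffOn)).div
    contDiff_fst.contDiffOn (fun p hp => hp))

lemma theta_fderiv (x y z u v w : ℝ) (hx : x ≠ 0) :
    fderiv ℝ Theta (x, y, z) (u, v, w)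
      = Real.exp z * (x * v + x * y * w - y * u) / (x ^ 2 + (y * Real.exp z) ^ 2) := by
  have hdiff : DifferentiableAt ℝ Theta (x, y, z) :=
    ((theta_contDiffOn.contDiffAt (isOpen_U.mem_nhds hx)).differentiableAt one_ne_zero)
  have hl : HasDerivAt (fun s : ℝ => ((x + s * u, y + s * v, z + s * w) : ℝ × ℝ × ℝ))
      ((u, v, w) : ℝ × ℝ × ℝ) 0 := by
    refine HasDerivAt.prodMk ?_ (HasDerivAt.prodMk ?_ ?_) <;>
      exact (hasDerivAt_mul_const _).const_add _
  have h0 : ((x + (0:ℝ) * u, y + (0:ℝ) * v, z + (0:ℝ) * w) : ℝ × ℝ × ℝ) = (x, y, z) := by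
    simp
  have hcomp : HasDerivAt (fun s : ℝ => Theta (x + s * u, y + s * v, z + s * w))
      (fderiv ℝ Theta (x, y, z) (u, v, w)) 0 := by
    exact HasFDerivAt.comp_hasDerivAt 0 (by rw [h0]; exact hdiff.hasFDerivAt) hl
  have hy' : HasDerivAt (fun s : ℝ => y + s * v) v 0 := by
    simpa using (hasDerivAt_mul_const v).const_add y
  have he : HasDerivAt (fun s : ℝ => Real.exp (z + s * w)) (Real.exp (z + 0 * w) * w) 0 := by
    exact HasDerivAt.exp (by simpa using (hasDerivAt_mul_const w).const_add z)
  have hxn : x + (0:ℝ) * u ≠ 0 := by simpa using hx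
  have hden : HasDerivAt (fun s : ℝ => x + s * u) u 0 := by
    simpa using (hasDerivAt_mul_const u).const_add x
  have hq := ((hy'.mul he).div hden hxn).arctan
  have huniq := hcomp.unique hq
  rw [huniq]
  have h1 : x ^ 2 + (y * Real.exp z) ^ 2 ≠ 0 := by positivity
  simp only [zero_mul, add_zero, mul_zero, Pi.mul_apply, Pi.div_apply]
  rw [div_pow]
  field_simp

lemma ftc_comp {a b : ℝ} (hab : a ≤ b) {U : Set (ℝ × ℝ × ℝ)} (hU : IsOpen U)
    {G : ℝ × ℝ × ℝ → ℝ} (hG : ContDiffOn ℝ 1 G U)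
    {f f₁ : ℝ → ℝ × ℝ × ℝ} (hf₁ : IntegrableOn f₁ (Icc a b))
    (hf : ∀ t ∈ Icc a b, f t = f a + ∫ τ in a..t, f₁ τ)
    (hmaps : ∀ t ∈ Icc a b, f t ∈ U) :
    IntervalIntegrable (fun t => fderiv ℝ G (f t) (f₁ t)) volume a b ∧
      G (f b) = G (f a) + ∫ t in a..b, fderiv ℝ G (f t) (f₁ t) := by
  have hab' : a ∈ Icc a b := ⟨le_rfl, hab⟩
  have hbb : b ∈ Icc a b := ⟨hab, le_rfl⟩
  -- continuity of f on [a,b]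
  have hcf : ContinuousOn f (Icc a b) := by
    apply ((continuousOn_const (c := f a)).add (intervalIntegral.continuousOn_primitive
      (μ := volume) (f := f₁) hf₁)).congr
    intro t ht
    simp only [Pi.add_apply]
    rw [hf t ht, intervalIntegral.integral_of_le ht.1]
  -- compact neighborhoods
  set K : Set (ℝ × ℝ × ℝ) := f '' Icc a b with hKdef
  have hK : IsCompact K := isCompact_Icc.image_of_continuousOn hcf
  have hKU : K ⊆ U := by rintro _ ⟨t, ht, rfl⟩; exact hmaps t ht
  obtain ⟨δ, hδpos, hδ⟩ := hK.exists_thickening_subset_open hU hKU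
  set K' : Set (ℝ × ℝ × ℝ) := Metric.cthickening (δ / 2) K with hK'def
  have hK'c : IsCompact K' := hK.cthickening
  have hK'U : K' ⊆ U :=
    (Metric.cthickening_subset_thickening' hδpos (half_lt_self hδpos) K).trans hδ
  have hKK' : K ⊆ K' := Metric.self_subset_cthickening K
  -- the derivative of G
  have hDG : ContinuousOn (fderiv ℝ G) U := hG.continuousOn_fderiv_of_isOpen hU le_rfl
  obtain ⟨C₀, hC₀⟩ := hK'c.exists_bound_of_continuousOn (hDG.mono hK'U)
  set C := max C₀ 0 with hCdef
  have hC : ∀ x ∈ K', ‖fderiv ℝ G x‖ ≤ C := fun x hx => (hC₀ x hx).trans (le_max_left _ _)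
  have hCpos : 0 ≤ C := le_max_right _ _
  set M := ∫ t in Icc a b, ‖f₁ t‖ with hMdef
  have hMpos : 0 ≤ M := integral_nonneg (fun t => norm_nonneg _)
  have hA : ContinuousOn (fun t => fderiv ℝ G (f t)) (Icc a b) :=
    hDG.comp hcf fun t ht => hmaps t ht
  -- integrability of the integrand
  have hgi : IntegrableOn (fun t => fderiv ℝ G (f t) (f₁ t)) (Icc a b) := by
    have hasm : AEStronglyMeasurable (fun t => fderiv ℝ G (f t) (f₁ t))
        (volume.restrict (Icc a b)) := by
      have h1 := hA.aestronglyMeasurable (μ := volume) measurableSet_Icc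
      have h2 := hf₁.aestronglyMeasurable
      exact isBoundedBilinearMap_apply.continuous.comp_aestronglyMeasurable (h1.prodMk h2)
    apply Integrable.mono' (hf₁.norm.const_mul C) hasm
    refine (ae_restrict_iff' measurableSet_Icc).2 (ae_of_all _ fun t ht => ?_)
    calc ‖fderiv ℝ G (f t) (f₁ t)‖ ≤ ‖fderiv ℝ G (f t)‖ * ‖f₁ t‖ :=
          ContinuousLinearMap.le_opNorm _ _
      _ ≤ C * ‖f₁ t‖ :=
          mul_le_mul_of_nonneg_right (hC _ (hKK' (mem_image_of_mem f ht))) (norm_nonneg _)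
  have hgii : IntervalIntegrable (fun t => fderiv ℝ G (f t) (f₁ t)) volume a b :=
    (intervalIntegrable_iff_integrableOn_Ioc_of_le hab).2 (hgi.mono_set Ioc_subset_Icc_self)
  refine ⟨hgii, ?_⟩
  set I := ∫ t in a..b, fderiv ℝ G (f t) (f₁ t) with hIdef
  -- it suffices to bound the defect by every ε > 0
  suffices hsuf : ∀ ε > 0, |G (f b) - (G (f a) + I)| ≤ ε by
    by_contra hne
    have h1 : 0 < |G (f b) - (G (f a) + I)| := by
      refine abs_pos.2 fun h => hne ?_
      linarith [sub_eq_zero.1 h]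
    have := hsuf _ (half_pos h1)
    linarith
  intro ε hε
  -- uniform continuity moduli on K'
  obtain ⟨δ₁, hδ₁pos, hδ₁⟩ := Metric.uniformContinuousOn_iff.1
    (hK'c.uniformContinuousOn_of_continuous (hG.continuousOn.mono hK'U)) (ε / 3)
    (by positivity)
  obtain ⟨δ₂, hδ₂pos, hδ₂⟩ := Metric.uniformContinuousOn_iff.1
    (hK'c.uniformContinuousOn_of_continuous (hDG.mono hK'U)) (ε / (3 * (M + 1)))
    (by positivity)
  set η := min (min (δ / 2) δ₁) (min δ₂ (ε / (3 * (C + 1)))) with hηdef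
  have hηpos : 0 < η := by
    simp only [hηdef, lt_min_iff]
    refine ⟨⟨by positivity, hδ₁pos⟩, hδ₂pos, by positivity⟩
  -- continuous approximation of f₁
  set fI := (Icc a b).indicator f₁ with hfIdef
  have hfI : Integrable fI volume :=
    (integrable_indicator_iff measurableSet_Icc).2 hf₁
  obtain ⟨h, _, hL1, hcont, hint⟩ :=
    hfI.exists_hasCompactSupport_integral_sub_le (half_pos hηpos)
  -- the approximating primitive
  set F := fun t => f a + ∫ τ in a..t, h τ with hFdef
  have hF : ∀ t, HasDerivAt F (h t) t := fun t =>
    ((hcont.integral_hasStrictDerivAt a t).hasDerivAt).const_add (f a)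
  have hFcont : Continuous F := by
    refine continuous_const.add ?_
    exact intervalIntegral.continuous_primitive (fun c d => hcont.intervalIntegrable _ _) a
  -- L¹ distance estimates
  have hsub : ∀ t ∈ Icc a b, Ioc a t ⊆ Icc a b := fun t ht =>
    Ioc_subset_Icc_self.trans (Icc_subset_Icc le_rfl ht.2)
  have hL1' : ∀ t ∈ Icc a b, (∫ τ in a..t, ‖h τ - f₁ τ‖) ≤ η / 2 := by
    intro t ht
    rw [intervalIntegral.integral_of_le ht.1]
    have heq : ∀ τ ∈ Ioc a t, ‖h τ - f₁ τ‖ = ‖fI τ - h τ‖ := by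
      intro τ hτ
      rw [hfIdef, indicator_of_mem (hsub t ht hτ), norm_sub_rev]
    rw [setIntegral_congr_fun measurableSet_Ioc heq]
    calc (∫ τ in Ioc a t, ‖fI τ - h τ‖) ≤ ∫ τ, ‖fI τ - h τ‖ :=
          setIntegral_le_integral (hfI.sub hint).norm (ae_of_all _ fun τ => norm_nonneg _)
      _ ≤ η / 2 := hL1
  have hdist : ∀ t ∈ Icc a b, dist (F t) (f t) ≤ η / 2 := by
    intro t ht
    have hi1 : IntervalIntegrable h volume a t := hcont.intervalIntegrable _ _
    have hi2 : IntervalIntegrable f₁ volume a t :=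
      (intervalIntegrable_iff_integrableOn_Ioc_of_le ht.1).2 (hf₁.mono_set (hsub t ht))
    rw [dist_eq_norm, hf t ht, hFdef]
    have : f a + (∫ τ in a..t, h τ) - (f a + ∫ τ in a..t, f₁ τ)
        = ∫ τ in a..t, (h τ - f₁ τ) := by
      rw [intervalIntegral.integral_sub hi1 hi2]; abel
    rw [this]
    exact (intervalIntegral.norm_integral_le_integral_norm ht.1).trans (hL1' t ht)
  have hηle : η / 2 ≤ δ / 2 := (half_le_self hηpos.le).trans
    ((min_le_left _ _).trans (min_le_left _ _))
  have hFK' : ∀ t ∈ Icc a b, F t ∈ K' :=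
    fun t ht => Metric.mem_cthickening_of_dist_le (F t) (f t) _ _
      (mem_image_of_mem f ht) ((hdist t ht).trans hηle)
  -- FTC for G ∘ F
  have hder : ∀ t ∈ uIcc a b, HasDerivAt (fun s => G (F s))
      (fderiv ℝ G (F t) (h t)) t := by
    intro t ht
    rw [uIcc_of_le hab] at ht
    have hdGF : HasFDerivAt G (fderiv ℝ G (F t)) (F t) :=
      ((hG.contDiffAt (hU.mem_nhds (hK'U (hFK' t ht)))).differentiableAt one_ne_zero).hasFDerivAt
    exact hdGF.comp_hasDerivAt t (hF t)
  have hA' : ContinuousOn (fun t => fderiv ℝ G (F t)) (Icc a b) :=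
    hDG.comp hFcont.continuousOn fun t ht => hK'U (hFK' t ht)
  have hggcont : ContinuousOn (fun t => fderiv ℝ G (F t) (h t)) (uIcc a b) := by
    rw [uIcc_of_le hab]
    exact isBoundedBilinearMap_apply.continuous.comp_continuousOn
      (hA'.prodMk hcont.continuousOn)
  have hggii : IntervalIntegrable (fun t => fderiv ℝ G (F t) (h t)) volume a b :=
    hggcont.intervalIntegrable
  have hFTC := intervalIntegral.integral_eq_sub_of_hasDerivAt hder hggii
  have hFa : F a = f a := by simp [hFdef]
  -- term 1 : |G (f b) - G (F b)|
  have hterm1 : |G (f b) - G (F b)| ≤ ε / 3 := by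
    have hd : dist (F b) (f b) < δ₁ := by
      refine lt_of_le_of_lt (hdist b hbb) (lt_of_lt_of_le (half_lt_self hηpos) ?_)
      exact (min_le_left _ _).trans (min_le_right _ _)
    have := hδ₁ (f b) (hKK' (mem_image_of_mem f hbb)) (F b) (hFK' b hbb)
      (by rwa [dist_comm])
    rw [Real.dist_eq] at this
    exact this.le
  -- term 2 : the integral difference
  have hptbd : ∀ t ∈ Icc a b,
      ‖fderiv ℝ G (F t) (h t) - fderiv ℝ G (f t) (f₁ t)‖
        ≤ C * ‖h t - f₁ t‖ + ε / (3 * (M + 1)) * ‖f₁ t‖ := by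
    intro t ht
    have hsplit : fderiv ℝ G (F t) (h t) - fderiv ℝ G (f t) (f₁ t)
        = fderiv ℝ G (F t) (h t - f₁ t) + (fderiv ℝ G (F t) - fderiv ℝ G (f t)) (f₁ t) := by
      simp only [map_sub, ContinuousLinearMap.sub_apply]; abel
    rw [hsplit]
    have hb1 : ‖fderiv ℝ G (F t) (h t - f₁ t)‖ ≤ C * ‖h t - f₁ t‖ :=
      (ContinuousLinearMap.le_opNorm _ _).trans
        (mul_le_mul_of_nonneg_right (hC _ (hFK' t ht)) (norm_nonneg _))
    have hb2 : ‖(fderiv ℝ G (F t) - fderiv ℝ G (f t)) (f₁ t)‖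
        ≤ ε / (3 * (M + 1)) * ‖f₁ t‖ := by
      refine (ContinuousLinearMap.le_opNorm _ _).trans
        (mul_le_mul_of_nonneg_right ?_ (norm_nonneg _))
      have hd : dist (F t) (f t) < δ₂ := by
        refine lt_of_le_of_lt (hdist t ht) (lt_of_lt_of_le (half_lt_self hηpos) ?_)
        exact (min_le_right _ _).trans (min_le_left _ _)
      have := hδ₂ (F t) (hFK' t ht) (f t) (hKK' (mem_image_of_mem f ht)) hd
      rw [dist_eq_norm] at this
      exact this.le
    exact (norm_add_le _ _).trans (add_le_add hb1 hb2)
  have hnormint : IntervalIntegrable (fun t => ‖h t - f₁ t‖) volume a b := by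
    refine IntervalIntegrable.norm ?_
    exact (hcont.intervalIntegrable a b).sub
      ((intervalIntegrable_iff_integrableOn_Ioc_of_le hab).2
        (hf₁.mono_set Ioc_subset_Icc_self))
  have hf₁normint : IntervalIntegrable (fun t => ‖f₁ t‖) volume a b :=
    ((intervalIntegrable_iff_integrableOn_Ioc_of_le hab).2
      (hf₁.mono_set Ioc_subset_Icc_self)).norm
  have hterm2 : |(∫ t in a..b, fderiv ℝ G (F t) (h t)) - I| ≤ ε / 3 + ε / 3 := by
    rw [hIdef, ← intervalIntegral.integral_sub hggii hgii]
    have hrhsint : IntervalIntegrable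
        (fun t => C * ‖h t - f₁ t‖ + ε / (3 * (M + 1)) * ‖f₁ t‖) volume a b :=
      (hnormint.const_mul C).add (hf₁normint.const_mul _)
    have hc1 : (∫ t in a..b, ‖h t - f₁ t‖) ≤ ε / (3 * (C + 1)) := by
      refine (hL1' b hbb).trans ((half_le_self hηpos.le).trans ?_)
      exact (min_le_right _ _).trans (min_le_right _ _)
    have hc1' : 0 ≤ ∫ t in a..b, ‖h t - f₁ t‖ :=
      intervalIntegral.integral_nonneg hab fun t _ => norm_nonneg _
    have hc2 : (∫ t in a..b, ‖f₁ t‖) ≤ M := by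
      rw [intervalIntegral.integral_of_le hab, hMdef]
      exact setIntegral_mono_set hf₁.norm (ae_of_all _ fun t => norm_nonneg _)
        (HasSubset.Subset.eventuallyLE Ioc_subset_Icc_self)
    calc |∫ t in a..b, (fderiv ℝ G (F t) (h t) - fderiv ℝ G (f t) (f₁ t))|
        ≤ ∫ t in a..b, ‖fderiv ℝ G (F t) (h t) - fderiv ℝ G (f t) (f₁ t)‖ := by
          rw [← Real.norm_eq_abs]
          exact intervalIntegral.norm_integral_le_integral_norm hab
      _ ≤ ∫ t in a..b, (C * ‖h t - f₁ t‖ + ε / (3 * (M + 1)) * ‖f₁ t‖) :=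
          intervalIntegral.integral_mono_on hab (hggii.sub hgii).norm hrhsint hptbd
      _ = C * (∫ t in a..b, ‖h t - f₁ t‖)
            + ε / (3 * (M + 1)) * ∫ t in a..b, ‖f₁ t‖ := by
          rw [intervalIntegral.integral_add (hnormint.const_mul C)
            (hf₁normint.const_mul _), intervalIntegral.integral_const_mul,
            intervalIntegral.integral_const_mul]
      _ ≤ ε / 3 + ε / 3 := by
          have hb1 : C * (∫ t in a..b, ‖h t - f₁ t‖) ≤ ε / 3 := by
            have := mul_le_mul_of_nonneg_left hc1 hCpos
            refine this.trans ?_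
            rw [mul_div_assoc', div_le_div_iff₀ (by positivity) (by norm_num)]
            nlinarith [hε.le, hCpos]
          have hb2 : ε / (3 * (M + 1)) * (∫ t in a..b, ‖f₁ t‖) ≤ ε / 3 := by
            have h0 : 0 ≤ ε / (3 * (M + 1)) := by positivity
            have := mul_le_mul_of_nonneg_left hc2 h0
            refine this.trans ?_
            rw [div_mul_eq_mul_div, div_le_div_iff₀ (by positivity) (by norm_num)]
            nlinarith [hε.le, hMpos]
          exact add_le_add hb1 hb2
  have hX : G (f b) - (G (f a) + I)
      = (G (f b) - G (F b)) + ((∫ t in a..b, fderiv ℝ G (F t) (h t)) - I) := by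
    rw [hFTC, hFa]; ring
  calc |G (f b) - (G (f a) + I)|
      ≤ |G (f b) - G (F b)| + |(∫ t in a..b, fderiv ℝ G (F t) (h t)) - I| := by
        rw [hX]; exact abs_add_le _ _
    _ ≤ ε / 3 + (ε / 3 + ε / 3) := add_le_add hterm1 hterm2
    _ = ε := by ring

/-- Theorem 2.3: an interval oscillation criterion for the system (2.3) on `[a,b]`. -/
theorem stmt2
    (t0 a b : ℝ) (hab : a < b) (ht0a : t0 ≤ a)
    (p11 p12 p21 p22 : ℝ → ℝ)
    (hp11 : LocallyIntegrableOn p11 (Ici t0)) (hp12 : LocallyIntegrableOn p12 (Ici t0))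
    (hp21 : LocallyIntegrableOn p21 (Ici t0)) (hp22 : LocallyIntegrableOn p22 (Ici t0))
    (hp12nonneg : ∀ t ∈ Icc a b, 0 ≤ p12 t)
    (hint : Real.pi ≤ ∫ t in a..b,
      min (p12 t * Real.exp (-∫ τ in a..t, (p11 τ - p22 τ)))
          (-(p21 t) * Real.exp (∫ τ in a..t, (p11 τ - p22 τ)))) :
    ∀ φ ψ : ℝ → ℝ, Sys2SolOn p11 p12 p21 p22 φ ψ t0 (Ici t0) →
      ∃ t ∈ Icc a b, φ t = 0 := by
  intro φ ψ hsol
  by_contra hcon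
  push_neg at hcon
  obtain ⟨dφ, dψ, hincr, hae⟩ := hsol
  have haI : a ∈ Ici t0 := ht0a
  have hbI : b ∈ Ici t0 := le_trans ht0a hab.le
  have hIccsub : Icc a b ⊆ Ici t0 := fun t ht => le_trans ht0a ht.1
  -- notation
  set E' : ℝ → ℝ := fun τ => p11 τ - p22 τ with hE'def
  set F : ℝ → ℝ := fun t => ∫ τ in a..t, E' τ with hFdef
  set f : ℝ → ℝ × ℝ × ℝ := fun t => (φ t, ψ t, F t) with hfdef
  set f₁ : ℝ → ℝ × ℝ × ℝ := fun t => (dφ t, dψ t, E' t) with hf₁def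
  set m : ℝ → ℝ := fun t => min (p12 t * Real.exp (-F t)) (-(p21 t) * Real.exp (F t))
    with hmdef
  have hintm : Real.pi ≤ ∫ t in a..b, m t := hint
  -- integrability of the pieces on [a, b]
  have hiφ : ∀ t ∈ Icc a b, IntervalIntegrable dφ volume a t := fun t ht =>
    ((hincr a haI).1).symm.trans (hincr t (hIccsub ht)).1
  have hiψ : ∀ t ∈ Icc a b, IntervalIntegrable dψ volume a t := fun t ht =>
    ((hincr a haI).2.1).symm.trans (hincr t (hIccsub ht)).2.1
  have hE'I : IntegrableOn E' (Icc a b) :=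
    (hp11.integrableOn_compact_subset hIccsub isCompact_Icc).sub
      (hp22.integrableOn_compact_subset hIccsub isCompact_Icc)
  have hsubIoc : ∀ t ∈ Icc a b, Ioc a t ⊆ Icc a b := fun t ht =>
    Ioc_subset_Icc_self.trans (Icc_subset_Icc le_rfl ht.2)
  have hiE : ∀ t ∈ Icc a b, IntervalIntegrable E' volume a t := fun t ht =>
    (intervalIntegrable_iff_integrableOn_Ioc_of_le ht.1).2 (hE'I.mono_set (hsubIoc t ht))
  have hf₁23 : ∀ t ∈ Icc a b,
      IntervalIntegrable (fun τ => ((dψ τ, E' τ) : ℝ × ℝ)) volume a t := fun t ht =>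
    ⟨((hiψ t ht).1).prodMk (hiE t ht).1, ((hiψ t ht).2).prodMk (hiE t ht).2⟩
  have hif₁ : ∀ t ∈ Icc a b, IntervalIntegrable f₁ volume a t := fun t ht =>
    ⟨((hiφ t ht).1).prodMk (hf₁23 t ht).1, ((hiφ t ht).2).prodMk (hf₁23 t ht).2⟩
  have hf₁int : IntegrableOn f₁ (Icc a b) := by
    rw [integrableOn_Icc_iff_integrableOn_Ioc]
    exact (hif₁ b ⟨hab.le, le_rfl⟩).1
  -- increments from `a`
  have hφeq : ∀ t ∈ Icc a b, φ t = φ a + ∫ τ in a..t, dφ τ := by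
    intro t ht
    have hadd := intervalIntegral.integral_add_adjacent_intervals
      (hincr a haI).1 (hiφ t ht)
    rw [(hincr t (hIccsub ht)).2.2.1, (hincr a haI).2.2.1, ← hadd]; ring
  have hψeq : ∀ t ∈ Icc a b, ψ t = ψ a + ∫ τ in a..t, dψ τ := by
    intro t ht
    have hadd := intervalIntegral.integral_add_adjacent_intervals
      (hincr a haI).2.1 (hiψ t ht)
    rw [(hincr t (hIccsub ht)).2.2.2, (hincr a haI).2.2.2, ← hadd]; ring
  have hfeq : ∀ t ∈ Icc a b, f t = f a + ∫ τ in a..t, f₁ τ := by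
    intro t ht
    have hsplit : (∫ τ in a..t, f₁ τ)
        = (∫ τ in a..t, dφ τ, ∫ τ in a..t, dψ τ, ∫ τ in a..t, E' τ) := by
      refine Prod.ext ?_ (Prod.ext ?_ ?_)
      · simpa using ((ContinuousLinearMap.fst ℝ ℝ (ℝ × ℝ)).intervalIntegral_comp_comm
          (hif₁ t ht)).symm
      · have h2 : (∫ τ in a..t, f₁ τ).2 = ∫ τ in a..t, ((dψ τ, E' τ) : ℝ × ℝ) := by
          simpa using ((ContinuousLinearMap.snd ℝ ℝ (ℝ × ℝ)).intervalIntegral_comp_comm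
            (hif₁ t ht)).symm
        rw [h2]
        simpa using ((ContinuousLinearMap.fst ℝ ℝ ℝ).intervalIntegral_comp_comm
          (hf₁23 t ht)).symm
      · have h2 : (∫ τ in a..t, f₁ τ).2 = ∫ τ in a..t, ((dψ τ, E' τ) : ℝ × ℝ) := by
          simpa using ((ContinuousLinearMap.snd ℝ ℝ (ℝ × ℝ)).intervalIntegral_comp_comm
            (hif₁ t ht)).symm
        rw [h2]
        simpa using ((ContinuousLinearMap.snd ℝ ℝ ℝ).intervalIntegral_comp_comm
          (hf₁23 t ht)).symm
    rw [hsplit, hfdef]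
    simp only [Prod.mk_add_mk, Prod.mk.injEq]
    refine ⟨hφeq t ht, hψeq t ht, ?_⟩
    simp [hFdef]
  have hmaps : ∀ t ∈ Icc a b, f t ∈ {p : ℝ × ℝ × ℝ | p.1 ≠ 0} := fun t ht => hcon t ht
  obtain ⟨hgii, hFTC⟩ := ftc_comp hab.le isOpen_U theta_contDiffOn hf₁int hfeq hmaps
  -- integrability of `m`
  have hFcont : ContinuousOn F (Icc a b) := by
    have h := intervalIntegral.continuousOn_primitive_interval (μ := volume) (f := E')
      (a := a) (b := b) (by rwa [uIcc_of_le hab.le])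
    rwa [uIcc_of_le hab.le] at h
  obtain ⟨cF, hcF⟩ := isCompact_Icc.exists_bound_of_continuousOn hFcont
  have hexpFasm : AEStronglyMeasurable (fun t => Real.exp (F t))
      (volume.restrict (Icc a b)) :=
    (Real.continuous_exp.comp_continuousOn hFcont).aestronglyMeasurable measurableSet_Icc
  have hexpnFasm : AEStronglyMeasurable (fun t => Real.exp (-F t))
      (volume.restrict (Icc a b)) :=
    (Real.continuous_exp.comp_continuousOn hFcont.neg).aestronglyMeasurable measurableSet_Icc
  have hp12I : IntegrableOn p12 (Icc a b) :=
    hp12.integrableOn_compact_subset hIccsub isCompact_Icc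
  have hp21I : IntegrableOn p21 (Icc a b) :=
    hp21.integrableOn_compact_subset hIccsub isCompact_Icc
  have hbd1 : ∀ᵐ t ∂(volume.restrict (Icc a b)), ‖Real.exp (-F t)‖ ≤ Real.exp cF := by
    refine (ae_restrict_iff' measurableSet_Icc).2 (ae_of_all _ fun t ht => ?_)
    rw [Real.norm_eq_abs, abs_of_pos (Real.exp_pos _)]
    exact Real.exp_le_exp.2 (neg_le.1 ((abs_le.1 ((Real.norm_eq_abs _ ▸ hcF t ht))).1))
  have hbd2 : ∀ᵐ t ∂(volume.restrict (Icc a b)), ‖Real.exp (F t)‖ ≤ Real.exp cF := by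
    refine (ae_restrict_iff' measurableSet_Icc).2 (ae_of_all _ fun t ht => ?_)
    rw [Real.norm_eq_abs, abs_of_pos (Real.exp_pos _)]
    exact Real.exp_le_exp.2 (abs_le.1 ((Real.norm_eq_abs _ ▸ hcF t ht))).2
  have hm1 : IntegrableOn (fun t => p12 t * Real.exp (-F t)) (Icc a b) := by
    have := Integrable.bdd_mul (c := Real.exp cF) hp12I hexpnFasm hbd1
    exact this.congr (ae_of_all _ fun t => mul_comm _ _)
  have hm2 : IntegrableOn (fun t => -(p21 t) * Real.exp (F t)) (Icc a b) := by
    have := Integrable.bdd_mul (c := Real.exp cF) hp21I.neg hexpFasm hbd2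
    exact this.congr (ae_of_all _ fun t => mul_comm _ _)
  have hmI : IntegrableOn m (Icc a b) := by
    have := hm1.inf hm2
    exact this
  have hmii : IntervalIntegrable m volume a b :=
    (intervalIntegrable_iff_integrableOn_Ioc_of_le hab.le).2 (hmI.mono_set Ioc_subset_Icc_self)
  -- the almost-everywhere bound
  have haebd : ∀ᵐ t ∂volume, t ∈ Ioc a b →
      fderiv ℝ Theta (f t) (f₁ t) ≤ -(m t) := by
    filter_upwards [hae] with t hdt hmem
    have htI : t ∈ Icc a b := Ioc_subset_Icc_self hmem
    obtain ⟨h1, h2⟩ := hdt (hIccsub htI)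
    have hx : φ t ≠ 0 := hcon t htI
    have hfd := theta_fderiv (φ t) (ψ t) (F t) (dφ t) (dψ t) (E' t) hx
    rw [show f t = (φ t, ψ t, F t) from rfl, show f₁ t = (dφ t, dψ t, E' t) from rfl,
      hfd, h1, h2]
    simp only [hmdef, hE'def]
    set A := Real.exp (F t) with hA
    have hApos : 0 < A := Real.exp_pos _
    have hexp2 : Real.exp (-F t) * A ^ 2 = A := by
      rw [sq, ← mul_assoc, ← Real.exp_add]
      simp [hA]
    have hden : 0 < φ t ^ 2 + (ψ t * A) ^ 2 := by positivity
    rw [div_le_iff₀ hden]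
    set m0 := min (p12 t * Real.exp (-F t)) (-(p21 t) * A) with hm0
    have k1 : m0 + p21 t * A ≤ 0 := by
      have := min_le_right (p12 t * Real.exp (-F t)) (-(p21 t) * A)
      rw [← hm0] at this; linarith
    have k2 : m0 * A ^ 2 - p12 t * A ≤ 0 := by
      have h3 := mul_le_mul_of_nonneg_right
        (min_le_left (p12 t * Real.exp (-F t)) (-(p21 t) * A)) (sq_nonneg A)
      rw [← hm0] at h3
      have : p12 t * Real.exp (-F t) * A ^ 2 = p12 t * A := by
        rw [mul_assoc, hexp2]
      linarith
    have g1 : φ t ^ 2 * (m0 + p21 t * A) ≤ 0 :=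
      mul_nonpos_of_nonneg_of_nonpos (sq_nonneg _) k1
    have g2 : ψ t ^ 2 * (m0 * A ^ 2 - p12 t * A) ≤ 0 :=
      mul_nonpos_of_nonneg_of_nonpos (sq_nonneg _) k2
    -- goal : A * (...) ≤ -m0 * (φ t ^ 2 + (ψ t * A) ^ 2)
    nlinarith [g1, g2]
  -- integral comparison
  have hcomp : (∫ t in a..b, fderiv ℝ Theta (f t) (f₁ t)) ≤ ∫ t in a..b, -(m t) := by
    rw [intervalIntegral.integral_of_le hab.le, intervalIntegral.integral_of_le hab.le]
    refine setIntegral_mono_ae_restrict ?_ ?_ ?_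
    · exact ((intervalIntegrable_iff_integrableOn_Ioc_of_le hab.le).1 hgii)
    · exact ((hmI.mono_set Ioc_subset_Icc_self).neg)
    · exact (ae_restrict_iff' measurableSet_Ioc).2 haebd
  have harcb : -(Real.pi / 2) < Theta (f b) := Real.neg_pi_div_two_lt_arctan _
  have harca : Theta (f a) < Real.pi / 2 := Real.arctan_lt_pi_div_two _
  rw [intervalIntegral.integral_neg] at hcomp
  linarith [hFTC, hcomp, hintm, harcb, harca]
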